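/- For every Itô *-algebra (𝔞, ⋆, d_t, l) there exist a complex inner product space K, a ℂ-linear map k : 𝔞 → K whose image spans K, and a ℂ-linear map i from 𝔞 into the ℂ-linear endomorphisms of K such that for all a, b, c ∈ 𝔞: ⟪k(a), k(b)⟫ = l(a⋆·b); i(a·b) = i(a) ∘ i(b); i(a)(k(b)) = k(a·b); and ⟪k(a), i(b)(k(c))⟫ = l(a⋆·b·c). In particular k(d_t) = 0 and i(d_t) = 0. -/

import Mathlib

namespace ItoGNS

variable {A : Type} [AddCommGroup A] [Module ℂ A]
variable (m : A →ₗ[ℂ] A →ₗ[ℂ] A) (st : A →ₗ⋆[ℂ] A) (l : A →ₗ[ℂ] ℂ)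

/-- The null space of the GNS form. -/
noncomputable def N : Submodule ℂ A := ⨅ b : A, LinearMap.ker (l ∘ₗ m b)

lemma mem_N {a : A} : a ∈ N m l ↔ ∀ b : A, l (m b a) = 0 := by
  simp [N, Submodule.mem_iInf, LinearMap.mem_ker]

lemma herm (hstm : ∀ a b : A, st (m a b) = m (st b) (st a))
    (hstst : ∀ a : A, st (st a) = a)
    (hlst : ∀ a : A, l (st a) = starRingEnd ℂ (l a)) (a b : A) :
    l (m (st a) b) = starRingEnd ℂ (l (m (st b) a)) := by
  rw [← hlst, hstm, hstst]

lemma mem_N_left (hstm : ∀ a b : A, st (m a b) = m (st b) (st a))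
    (hstst : ∀ a : A, st (st a) = a)
    (hlst : ∀ a : A, l (st a) = starRingEnd ℂ (l a))
    {a : A} (ha : a ∈ N m l) (b : A) : l (m (st a) b) = 0 := by
  rw [herm m st l hstm hstst hlst, (mem_N m l).mp ha (st b), map_zero]

open ComplexOrder in
/-- The GNS pre-inner-product space structure on `A`. -/
noncomputable def preCore (hstm : ∀ a b : A, st (m a b) = m (st b) (st a))
    (hstst : ∀ a : A, st (st a) = a)
    (hlst : ∀ a : A, l (st a) = starRingEnd ℂ (l a))
    (hlpos : ∀ a : A, 0 ≤ l (m (st a) a)) :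
    PreInnerProductSpace.Core ℂ A where
  inner a b := l (m (st a) b)
  conj_inner_symm x y := (herm m st l hstm hstst hlst x y).symm
  re_inner_nonneg x := by
    have h := hlpos x
    rw [Complex.le_def] at h
    simpa using h.1
  add_left x y z := by simp
  smul_left x y r := by simp

open ComplexOrder in
lemma mem_N_of_self (hstm : ∀ a b : A, st (m a b) = m (st b) (st a))
    (hstst : ∀ a : A, st (st a) = a)
    (hlst : ∀ a : A, l (st a) = starRingEnd ℂ (l a))
    (hlpos : ∀ a : A, 0 ≤ l (m (st a) a))
    {a : A} (h : l (m (st a) a) = 0) : a ∈ N m l := by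
  letI c : PreInnerProductSpace.Core ℂ A := preCore m st l hstm hstst hlst hlpos
  letI : Inner ℂ A := c.toInner
  rw [mem_N]
  intro b
  have hcs := InnerProductSpace.Core.inner_mul_inner_self_le (𝕜 := ℂ) (F := A) (st b) a
  have h1 : (inner ℂ (st b) a : ℂ) = l (m b a) := by
    show l (m (st (st b)) a) = l (m b a)
    rw [hstst]
  have h2 : (inner ℂ a a : ℂ) = (0 : ℂ) := h
  have h3 : (inner ℂ a (st b) : ℂ) = starRingEnd ℂ (inner ℂ (st b) a : ℂ) :=
    (c.conj_inner_symm _ _).symm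
  rw [h2] at hcs
  simp only [h3, RCLike.norm_conj, map_zero, Complex.zero_re, mul_zero] at hcs
  have h4 : ‖(inner ℂ (st b) a : ℂ)‖ = 0 := by nlinarith [norm_nonneg (inner ℂ (st b) a : ℂ)]
  rw [← h1, ← norm_eq_zero]
  exact h4

/-- The GNS form descended to the quotient in the second variable. -/
noncomputable def C2 (a : A) : (A ⧸ N m l) →ₗ[ℂ] ℂ :=
  Submodule.liftQ (N m l) (l ∘ₗ m a) (fun b hb => (mem_N m l).mp hb a)

/-- The inner product on the quotient. -/
noncomputable def innerK (hstm : ∀ a b : A, st (m a b) = m (st b) (st a))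
    (hstst : ∀ a : A, st (st a) = a)
    (hlst : ∀ a : A, l (st a) = starRingEnd ℂ (l a)) :
    (A ⧸ N m l) → (A ⧸ N m l) → ℂ :=
  fun x y => Quotient.liftOn' x (fun a => C2 m l (st a) y) (fun a a' hrel => by
    have hmem : a - a' ∈ N m l := (Submodule.quotientRel_def _).mp hrel
    have h : C2 m l (st a) = C2 m l (st a') := by
      apply Submodule.linearMap_qext
      ext b
      show l (m (st a) b) = l (m (st a') b)
      have h0 := mem_N_left m st l hstm hstst hlst hmem b
      have h1 : st (a - a') = st a - st a' := map_sub st a a'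
      rw [h1, map_sub, LinearMap.sub_apply, map_sub, sub_eq_zero] at h0
      exact h0
    simp only [h])

lemma innerK_mk (hstm : ∀ a b : A, st (m a b) = m (st b) (st a))
    (hstst : ∀ a : A, st (st a) = a)
    (hlst : ∀ a : A, l (st a) = starRingEnd ℂ (l a)) (a b : A) :
    innerK m st l hstm hstst hlst (Submodule.Quotient.mk a) (Submodule.Quotient.mk b)
      = l (m (st a) b) := rfl

open ComplexOrder in
/-- The GNS inner product space core on the quotient. -/
noncomputable def coreK (hstm : ∀ a b : A, st (m a b) = m (st b) (st a))
    (hstst : ∀ a : A, st (st a) = a)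
    (hlst : ∀ a : A, l (st a) = starRingEnd ℂ (l a))
    (hlpos : ∀ a : A, 0 ≤ l (m (st a) a)) :
    InnerProductSpace.Core ℂ (A ⧸ N m l) where
  inner := innerK m st l hstm hstst hlst
  conj_inner_symm x y := by
    obtain ⟨a, rfl⟩ := Submodule.Quotient.mk_surjective _ x
    obtain ⟨b, rfl⟩ := Submodule.Quotient.mk_surjective _ y
    show starRingEnd ℂ (l (m (st b) a)) = l (m (st a) b)
    exact (herm m st l hstm hstst hlst a b).symm
  re_inner_nonneg x := by
    obtain ⟨a, rfl⟩ := Submodule.Quotient.mk_surjective _ x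
    have h := hlpos a
    rw [Complex.le_def] at h
    exact (by simpa using h.1 : 0 ≤ (l (m (st a) a)).re)
  add_left x y z := by
    obtain ⟨a, rfl⟩ := Submodule.Quotient.mk_surjective _ x
    obtain ⟨b, rfl⟩ := Submodule.Quotient.mk_surjective _ y
    obtain ⟨c, rfl⟩ := Submodule.Quotient.mk_surjective _ z
    rw [← Submodule.Quotient.mk_add]
    show l (m (st (a + b)) c) = l (m (st a) c) + l (m (st b) c)
    simp
  smul_left x y r := by
    obtain ⟨a, rfl⟩ := Submodule.Quotient.mk_surjective _ x
    obtain ⟨b, rfl⟩ := Submodule.Quotient.mk_surjective _ y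
    rw [← Submodule.Quotient.mk_smul]
    show l (m (st (r • a)) b) = starRingEnd ℂ r * l (m (st a) b)
    simp
  definite x h := by
    obtain ⟨a, rfl⟩ := Submodule.Quotient.mk_surjective _ x
    rw [Submodule.Quotient.mk_eq_zero]
    exact mem_N_of_self m st l hstm hstst hlst hlpos h

/-- Left multiplication descended to the quotient. -/
noncomputable def iMap (hassoc : ∀ a b c : A, m (m a b) c = m a (m b c)) (a : A) :
    (A ⧸ N m l) →ₗ[ℂ] (A ⧸ N m l) :=
  Submodule.mapQ (N m l) (N m l) (m a) (by
    intro b hb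
    rw [Submodule.mem_comap, mem_N]
    intro c
    rw [← hassoc]
    exact (mem_N m l).mp hb (m c a))

/-- Left multiplication as a linear map into endomorphisms of the quotient. -/
noncomputable def iL (hassoc : ∀ a b c : A, m (m a b) c = m a (m b c)) :
    A →ₗ[ℂ] ((A ⧸ N m l) →ₗ[ℂ] (A ⧸ N m l)) where
  toFun := iMap m l hassoc
  map_add' a a' := by
    apply Submodule.linearMap_qext
    ext b
    simp [iMap, Submodule.mapQ_apply]
  map_smul' r a := by
    apply Submodule.linearMap_qext
    ext b
    simp [iMap, Submodule.mapQ_apply]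

end ItoGNS

open ComplexOrder in
/-- Every Itô *-algebra `(A, ⋆, dt, l)` admits a canonical (GNS-type)
representation: a complex inner product space `K`, a linear map `k : A → K` with spanning
image, and a linear multiplicative map `i : A → End(K)` such that
`⟪k a, k b⟫ = l (a⋆·b)`, `i (a·b) = i a ∘ i b`, `i a (k b) = k (a·b)` and
`⟪k a, i b (k c)⟫ = l (a⋆·b·c)`; in particular `k dt = 0` and `i dt = 0`. -/
theorem ito_canonical_representation
    {A : Type} [AddCommGroup A] [Module ℂ A]
    (m : A →ₗ[ℂ] A →ₗ[ℂ] A) (st : A →ₗ⋆[ℂ] A) (dt : A) (l : A →ₗ[ℂ] ℂ)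
    (hassoc : ∀ a b c : A, m (m a b) c = m a (m b c))
    (hstm : ∀ a b : A, st (m a b) = m (st b) (st a))
    (hstst : ∀ a : A, st (st a) = a)
    (hstdt : st dt = dt)
    (hmdt : ∀ a : A, m a dt = 0)
    (hdtm : ∀ a : A, m dt a = 0)
    (hldt : l dt = 1)
    (hlst : ∀ a : A, l (st a) = starRingEnd ℂ (l a))
    (hlpos : ∀ a : A, 0 ≤ l (m (st a) a)) :
    ∃ (K : Type) (_ : NormedAddCommGroup K) (_ : InnerProductSpace ℂ K)
      (k : A →ₗ[ℂ] K) (i : A →ₗ[ℂ] (K →ₗ[ℂ] K)),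
      Submodule.span ℂ (Set.range k) = ⊤ ∧
      (∀ a b : A, (inner ℂ (k a) (k b) : ℂ) = l (m (st a) b)) ∧
      (∀ a b : A, i (m a b) = (i a) ∘ₗ (i b)) ∧
      (∀ a b : A, i a (k b) = k (m a b)) ∧
      (∀ a b c : A, (inner ℂ (k a) (i b (k c)) : ℂ) = l (m (st a) (m b c))) ∧
      k dt = 0 ∧ i dt = 0 := by
  classical
  letI core := ItoGNS.coreK m st l hstm hstst hlst hlpos
  letI : NormedAddCommGroup (A ⧸ ItoGNS.N m l) :=
    @InnerProductSpace.Core.toNormedAddCommGroup ℂ _ _ _ _ core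
  letI : InnerProductSpace ℂ (A ⧸ ItoGNS.N m l) := InnerProductSpace.ofCore core.toCore
  refine ⟨A ⧸ ItoGNS.N m l, _, _, (ItoGNS.N m l).mkQ, ItoGNS.iL m l hassoc,
    ?_, ?_, ?_, ?_, ?_, ?_, ?_⟩
  · rw [eq_top_iff]
    rintro x -
    obtain ⟨a, rfl⟩ := Submodule.Quotient.mk_surjective _ x
    exact Submodule.subset_span ⟨a, rfl⟩
  · intro a b
    exact ItoGNS.innerK_mk m st l hstm hstst hlst a b
  · intro a b
    apply Submodule.linearMap_qext
    ext c
    simp [ItoGNS.iL, ItoGNS.iMap, Submodule.mapQ_apply, hassoc]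
  · intro a b
    simp [ItoGNS.iL, ItoGNS.iMap, Submodule.mapQ_apply]
  · intro a b c
    have h1 : (ItoGNS.iL m l hassoc) b ((ItoGNS.N m l).mkQ c)
        = (ItoGNS.N m l).mkQ (m b c) := by
      simp [ItoGNS.iL, ItoGNS.iMap, Submodule.mapQ_apply]
    rw [h1]
    exact ItoGNS.innerK_mk m st l hstm hstst hlst a (m b c)
  · rw [Submodule.mkQ_apply, Submodule.Quotient.mk_eq_zero, ItoGNS.mem_N]
    intro b
    rw [hmdt, map_zero]
  · apply Submodule.linearMap_qext
    ext b
    simp [ItoGNS.iL, ItoGNS.iMap, Submodule.mapQ_apply, hdtm]
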